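/- For all real numbers θ and φ, define the two 4×4 complex matrices A := CZ · (U(θ) ⊗ₖ I₂) · (Z ⊗ₖ I₂) · (U(θ) ⊗ₖ I₂) · CZ and B := ((P(φ) ⊗ₖ I₂))† · (U(θ) ⊗ₖ I₂) · (Z ⊗ₖ I₂) · (U(θ) ⊗ₖ I₂) · (P(φ) ⊗ₖ I₂). Then ‖A − B‖_F = 2·√2·|sin θ|, and consequently the imprecision of the initial-guess operator Z ⊗ₖ I₂ equals ‖A − B‖_F / (2·‖Z ⊗ₖ I₂‖_F) = |sin θ|/√2, independent of the disorder angle φ. -/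

import Mathlib

open Matrix Kronecker

/-- Frobenius norm of a square complex matrix: `‖A‖_F = √(Tr(A†A))`. -/
noncomputable def frobNorm {n : Type*} [Fintype n] (A : Matrix n n ℂ) : ℝ :=
  Real.sqrt (Matrix.trace (Aᴴ * A)).re

/-- The Pauli Z matrix. -/
def PauliZ : Matrix (Fin 2) (Fin 2) ℂ := !![1, 0; 0, -1]

/-- The kick gate `U(θ)`. -/
noncomputable def kickGate (θ : ℝ) : Matrix (Fin 2) (Fin 2) ℂ :=
  !![(Real.cos (θ / 2) : ℂ), (Real.sin (θ / 2) : ℂ);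
     (Real.sin (θ / 2) : ℂ), (-Real.cos (θ / 2) : ℂ)]

/-- The disorder gate `P(φ)`. -/
noncomputable def disorderGate (φ : ℝ) : Matrix (Fin 2) (Fin 2) ℂ :=
  !![1, 0; 0, Complex.exp (Complex.I * φ)]

/-- The controlled-Z gate: the diagonal matrix `diag(1, 1, 1, -1)` on two qubits,
indexed by `Fin 2 × Fin 2` in the standard ordering `(0,0), (0,1), (1,0), (1,1)`. -/
def CZgate : Matrix (Fin 2 × Fin 2) (Fin 2 × Fin 2) ℂ :=
  Matrix.diagonal (fun p => if p.1 = 1 ∧ p.2 = 1 then -1 else 1)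

lemma hV (θ : ℝ) : kickGate θ * (PauliZ * kickGate θ) =
    !![(Real.cos θ : ℂ), (Real.sin θ : ℂ); (Real.sin θ : ℂ), (-Real.cos θ : ℂ)] := by
  have hs : Real.sin θ = 2 * Real.sin (θ/2) * Real.cos (θ/2) := by
    rw [← Real.sin_two_mul]; ring_nf
  have hc : Real.cos θ = Real.cos (θ/2)^2 - Real.sin (θ/2)^2 := by
    have h1 := Real.cos_two_mul (θ/2)
    have h2 := Real.sin_sq_add_cos_sq (θ/2)
    rw [show 2*(θ/2) = θ by ring] at h1; nlinarith
  ext i j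
  fin_cases i <;> fin_cases j <;>
    simp [kickGate, PauliZ, Matrix.mul_apply, Fin.sum_univ_two, hs, hc] <;> ring

lemma collapse (X Y : Matrix (Fin 2) (Fin 2) ℂ)
    (M : Matrix (Fin 2 × Fin 2) (Fin 2 × Fin 2) ℂ) :
    (X ⊗ₖ (1 : Matrix (Fin 2) (Fin 2) ℂ)) * ((Y ⊗ₖ (1 : Matrix (Fin 2) (Fin 2) ℂ)) * M)
      = ((X * Y) ⊗ₖ (1 : Matrix (Fin 2) (Fin 2) ℂ)) * M := by
  rw [← Matrix.mul_assoc, ← Matrix.mul_kronecker_mul, Matrix.one_mul]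

lemma collapse2 (X Y : Matrix (Fin 2) (Fin 2) ℂ) :
    (X ⊗ₖ (1 : Matrix (Fin 2) (Fin 2) ℂ)) * (Y ⊗ₖ (1 : Matrix (Fin 2) (Fin 2) ℂ))
      = (X * Y) ⊗ₖ (1 : Matrix (Fin 2) (Fin 2) ℂ) := by
  rw [← Matrix.mul_kronecker_mul, Matrix.one_mul]

lemma kronCT (X : Matrix (Fin 2) (Fin 2) ℂ) :
    (X ⊗ₖ (1 : Matrix (Fin 2) (Fin 2) ℂ))ᴴ = Xᴴ ⊗ₖ (1 : Matrix (Fin 2) (Fin 2) ℂ) := by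
  ext ⟨i,j⟩ ⟨k,l⟩
  simp [Matrix.conjTranspose_apply, Matrix.one_apply, eq_comm]
  split <;> simp

set_option maxHeartbeats 1000000 in
lemma key (θ φ : ℝ) :
    let A := CZgate * (kickGate θ ⊗ₖ (1 : Matrix (Fin 2) (Fin 2) ℂ)) *
        (PauliZ ⊗ₖ (1 : Matrix (Fin 2) (Fin 2) ℂ)) *
        (kickGate θ ⊗ₖ (1 : Matrix (Fin 2) (Fin 2) ℂ)) * CZgate
    let B := (disorderGate φ ⊗ₖ (1 : Matrix (Fin 2) (Fin 2) ℂ))ᴴ *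
        (kickGate θ ⊗ₖ (1 : Matrix (Fin 2) (Fin 2) ℂ)) *
        (PauliZ ⊗ₖ (1 : Matrix (Fin 2) (Fin 2) ℂ)) *
        (kickGate θ ⊗ₖ (1 : Matrix (Fin 2) (Fin 2) ℂ)) *
        (disorderGate φ ⊗ₖ (1 : Matrix (Fin 2) (Fin 2) ℂ))
    (Matrix.trace ((A - B)ᴴ * (A - B))).re = 8 * Real.sin θ ^ 2 := by
  intro A B
  set V := !![(Real.cos θ : ℂ), (Real.sin θ : ℂ); (Real.sin θ : ℂ), (-Real.cos θ : ℂ)] with hVdef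
  have hA : A = CZgate * (V ⊗ₖ (1 : Matrix (Fin 2) (Fin 2) ℂ)) * CZgate := by
    simp only [A, Matrix.mul_assoc, collapse, hV θ]; rfl
  have hV2 : kickGate θ * (PauliZ * (kickGate θ * disorderGate φ)) = V * disorderGate φ := by
    rw [hVdef, ← hV θ]; simp only [Matrix.mul_assoc]
  have hB : B = ((disorderGate φ)ᴴ * (V * disorderGate φ)) ⊗ₖ (1 : Matrix (Fin 2) (Fin 2) ℂ) := by
    simp only [B, Matrix.mul_assoc, collapse, collapse2, hV2, kronCT]
  have he : Complex.exp (Complex.I * φ) = ⟨Real.cos φ, Real.sin φ⟩ := by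
    rw [mul_comm, Complex.exp_mul_I]
    simp [Complex.ext_iff, Complex.cos_ofReal_re, Complex.sin_ofReal_re]
  rw [hA, hB]
  simp only [Matrix.trace, Matrix.diag_apply, Matrix.mul_apply, Matrix.sub_apply,
    Matrix.conjTranspose_apply, Fintype.sum_prod_type, Fin.sum_univ_two,
    CZgate, Matrix.diagonal_mul, Matrix.mul_diagonal, Matrix.kroneckerMap_apply,
    Matrix.one_apply, disorderGate, hVdef, he, Matrix.diagonal_apply, Prod.mk.injEq,
    Matrix.cons_val', Matrix.cons_val_zero, Matrix.cons_val_one, Matrix.head_cons,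
    Matrix.head_fin_const, Matrix.empty_val', Matrix.cons_val_fin_one]
  norm_num [Complex.ext_iff, Complex.mul_re, Complex.mul_im, Complex.add_re, Complex.add_im,
    Complex.sub_re, Complex.sub_im, Complex.conj_re, Complex.conj_im,
    Complex.sin_ofReal_re, Complex.cos_ofReal_re]
  have h2 := Real.sin_sq_add_cos_sq φ
  linear_combination (4*Real.sin θ^2 + 2*Real.cos θ^2*(Real.sin φ^2 + Real.cos φ^2 - 1)) * h2


theorem initial_guess_imprecision (θ φ : ℝ) :
    let A := CZgate * (kickGate θ ⊗ₖ (1 : Matrix (Fin 2) (Fin 2) ℂ)) *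
        (PauliZ ⊗ₖ (1 : Matrix (Fin 2) (Fin 2) ℂ)) *
        (kickGate θ ⊗ₖ (1 : Matrix (Fin 2) (Fin 2) ℂ)) * CZgate
    let B := (disorderGate φ ⊗ₖ (1 : Matrix (Fin 2) (Fin 2) ℂ))ᴴ *
        (kickGate θ ⊗ₖ (1 : Matrix (Fin 2) (Fin 2) ℂ)) *
        (PauliZ ⊗ₖ (1 : Matrix (Fin 2) (Fin 2) ℂ)) *
        (kickGate θ ⊗ₖ (1 : Matrix (Fin 2) (Fin 2) ℂ)) *
        (disorderGate φ ⊗ₖ (1 : Matrix (Fin 2) (Fin 2) ℂ))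
    frobNorm (A - B) = 2 * Real.sqrt 2 * |Real.sin θ| ∧
    frobNorm (A - B) / (2 * frobNorm (PauliZ ⊗ₖ (1 : Matrix (Fin 2) (Fin 2) ℂ))) =
      |Real.sin θ| / Real.sqrt 2 := by
  intro A B
  have hkey := key θ φ
  simp only at hkey
  have h1 : frobNorm (A - B) = 2 * Real.sqrt 2 * |Real.sin θ| := by
    rw [frobNorm, hkey, show (8:ℝ) * Real.sin θ ^ 2 = (2 * Real.sqrt 2 * |Real.sin θ|)^2 by
      rw [mul_pow, mul_pow, Real.sq_sqrt (by norm_num), sq_abs]; ring]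
    exact Real.sqrt_sq (by positivity)
  have hZ : frobNorm (PauliZ ⊗ₖ (1 : Matrix (Fin 2) (Fin 2) ℂ)) = 2 := by
    rw [frobNorm]
    norm_num [Matrix.trace, Matrix.mul_apply, Fintype.sum_prod_type, Fin.sum_univ_two,
      PauliZ, Matrix.one_apply, Matrix.conjTranspose_apply]
  refine ⟨h1, ?_⟩
  rw [h1, hZ]
  have hs2 : Real.sqrt 2 > 0 := by positivity
  field_simp
  nlinarith [Real.sq_sqrt (show (0:ℝ) ≤ 2 by norm_num), abs_nonneg (Real.sin θ)]
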